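/- Let D = (V, E, w) be a vertex-weighted oriented graph having a connected component consisting of the single edge (y,z) (so the only edge incident to y or z is (y,z)). Then for every integer t ≥ 2, one has I(D)^t = I(D∖z)^t + x_y·x_z^{w(z)}·I(D)^{t−1} and (x_y·x_z^{w(z)}·I(D)^{t−1}) ∩ I(D∖z)^t = x_y·x_z^{w(z)}·I(D∖z)^t. -/

import Mathlib

open MvPolynomial

/-- The edge ideal of a vertex-weighted oriented graph with edge set `E` and
weight function `w`. -/
noncomputable def edgeIdeal (k : Type*) [Field k] {V : Type*} (E : Finset (V × V))
    (w : V → ℕ) : Ideal (MvPolynomial V k) :=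
  Ideal.span ((fun e : V × V => X e.1 * X e.2 ^ w e.2) '' (E : Set (V × V)))


noncomputable def liftHom (k V : Type) [Field k] [DecidableEq V] (y z : V) :
    MvPolynomial V k →+* MvPolynomial V (MvPolynomial V k) :=
  eval₂Hom (C.comp C) (fun v => if v = y ∨ v = z then X v else C (X v))

lemma retract_liftHom (k V : Type) [Field k] [DecidableEq V] (y z : V) :
    (eval₂Hom (RingHom.id (MvPolynomial V k)) X).comp (liftHom k V y z)
      = RingHom.id (MvPolynomial V k) := by
  apply MvPolynomial.ringHom_ext
  · intro a
    rw [RingHom.comp_apply, liftHom, eval₂Hom_C, RingHom.comp_apply, eval₂Hom_C,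
      RingHom.id_apply]
  · intro v
    rw [RingHom.comp_apply, liftHom, eval₂Hom_X', RingHom.id_apply]
    by_cases h : v = y ∨ v = z
    · rw [if_pos h, eval₂Hom_X']
    · rw [if_neg h, eval₂Hom_C, RingHom.id_apply]

lemma key_colon (k V : Type) [Field k] [DecidableEq V] (y z : V) (c : ℕ)
    (G : Set (MvPolynomial V k)) (hG : ∀ g ∈ G, liftHom k V y z g = C g)
    (t : ℕ) (h : MvPolynomial V k)
    (hm : X y * X z ^ c * h ∈ (Ideal.span G) ^ t) :
    h ∈ (Ideal.span G) ^ t := by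
  set φ := liftHom k V y z with hφ
  set ψ := eval₂Hom (RingHom.id (MvPolynomial V k)) (X : V → MvPolynomial V k) with hψ
  set A := (Ideal.span G) ^ t with hA
  have hmap : Ideal.map φ A ≤ Ideal.map (C : MvPolynomial V k →+* _) A := by
    rw [hA, Ideal.map_pow, Ideal.map_pow]
    apply Ideal.pow_right_mono
    rw [Ideal.map_span, Ideal.map_span]
    apply Ideal.span_mono
    rintro m ⟨g, hg, rfl⟩
    exact ⟨g, hg, (hG g hg).symm⟩
  have h1 : φ (X y * X z ^ c * h) ∈ Ideal.map (C : MvPolynomial V k →+* _) A :=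
    hmap (Ideal.mem_map_of_mem φ hm)
  have hφf : φ (X y * X z ^ c * h)
      = monomial (Finsupp.single y 1 + Finsupp.single z c) 1 * φ h := by
    have hy : φ (X y) = X y := by
      rw [hφ, liftHom, eval₂Hom_X', if_pos (Or.inl rfl)]
    have hz : φ (X z) = X z := by
      rw [hφ, liftHom, eval₂Hom_X', if_pos (Or.inr rfl)]
    rw [map_mul, map_mul, map_pow, hy, hz]
    congr 1
    rw [X_pow_eq_monomial, X, monomial_mul, one_mul]
  rw [hφf, mem_map_C_iff] at h1
  have h2 : φ h ∈ Ideal.map (C : MvPolynomial V k →+* _) A := by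
    rw [mem_map_C_iff]
    intro m
    have := h1 (Finsupp.single y 1 + Finsupp.single z c + m)
    rwa [coeff_monomial_mul, one_mul] at this
  have hψC : (ψ : MvPolynomial V (MvPolynomial V k) →+* _).comp
      (C : MvPolynomial V k →+* _) = RingHom.id _ := by
    apply MvPolynomial.ringHom_ext
    · intro a
      rw [RingHom.comp_apply, hψ, eval₂Hom_C, RingHom.id_apply]
    · intro a
      rw [RingHom.comp_apply, hψ, eval₂Hom_C, RingHom.id_apply]
  have h3 : ψ (φ h) ∈ A := by
    have := Ideal.mem_map_of_mem ψ h2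
    rwa [Ideal.map_map, hψC, Ideal.map_id] at this
  have h4 : ψ (φ h) = h := RingHom.congr_fun (retract_liftHom k V y z) h
  rwa [h4] at h3

lemma sup_pow_eq {R : Type*} [CommSemiring R] (A B : Ideal R) (t : ℕ) (ht : 1 ≤ t) :
    (A ⊔ B) ^ t = A ^ t ⊔ B * (A ⊔ B) ^ (t - 1) := by
  induction t with
  | zero => omega
  | succ n ih =>
    simp only [Nat.add_sub_cancel]
    refine le_antisymm ?_ ?_
    · rw [pow_succ, Ideal.mul_sup]
      apply sup_le
      · rcases Nat.lt_or_ge n 1 with hn | hn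
        · interval_cases n
          simpa using le_sup_left
        · calc (A ⊔ B) ^ n * A = (A ^ n ⊔ B * (A ⊔ B) ^ (n - 1)) * A := by rw [ih hn]
            _ = A ^ n * A ⊔ B * (A ⊔ B) ^ (n - 1) * A := Ideal.sup_mul _ _ _
            _ ≤ A ^ (n + 1) ⊔ B * (A ⊔ B) ^ n := by
                apply sup_le
                · rw [← pow_succ]; exact le_sup_left
                · refine le_sup_of_le_right ?_
                  rw [mul_assoc]
                  refine Ideal.mul_mono_right ?_
                  have h2 : (A ⊔ B) ^ (n - 1) * A ≤ (A ⊔ B) ^ (n - 1) * (A ⊔ B) :=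
                    Ideal.mul_mono_right le_sup_left
                  rwa [← pow_succ, Nat.sub_add_cancel hn] at h2
      · rw [mul_comm]; exact le_sup_right
    · apply sup_le
      · exact Ideal.pow_right_mono le_sup_left (n + 1)
      · calc B * (A ⊔ B) ^ n ≤ (A ⊔ B) * (A ⊔ B) ^ n := Ideal.mul_mono_left le_sup_right
          _ = (A ⊔ B) ^ (n + 1) := by rw [pow_succ, mul_comm]

/-- **Lemma.** Let `D` be a vertex-weighted oriented graph having a connected component
consisting of the single edge `(y, z)`.  Then for all `t ≥ 2`,
`I(D)^t = I(D \ z)^t + x_y x_z^{w_z} I(D)^{t-1}` and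
`(x_y x_z^{w_z} I(D)^{t-1}) ∩ I(D \ z)^t = x_y x_z^{w_z} I(D \ z)^t`. -/
theorem pow_edgeIdeal_isolatedEdge_decomposition
    (k : Type) [Field k] (V : Type) [DecidableEq V]
    (E : Finset (V × V)) (w : V → ℕ)
    (hw : ∀ v : V, 1 ≤ w v)
    (hloop : ∀ e ∈ E, e.1 ≠ e.2)
    (y z : V) (hyz : (y, z) ∈ E)
    (hcomp : ∀ e ∈ E, (e.1 = y ∨ e.2 = y ∨ e.1 = z ∨ e.2 = z) → e = (y, z))
    (t : ℕ) (ht : 2 ≤ t) :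
    (edgeIdeal k E w) ^ t
        = (edgeIdeal k (E.filter (fun e => e.1 ≠ z ∧ e.2 ≠ z)) w) ^ t
            ⊔ Ideal.span {X y * (X z : MvPolynomial V k) ^ w z} * (edgeIdeal k E w) ^ (t - 1)
    ∧ (Ideal.span {X y * (X z : MvPolynomial V k) ^ w z} * (edgeIdeal k E w) ^ (t - 1))
          ⊓ (edgeIdeal k (E.filter (fun e => e.1 ≠ z ∧ e.2 ≠ z)) w) ^ t
        = Ideal.span {X y * (X z : MvPolynomial V k) ^ w z}
            * (edgeIdeal k (E.filter (fun e => e.1 ≠ z ∧ e.2 ≠ z)) w) ^ t := by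
  classical
  set E' : Finset (V × V) := E.filter (fun e => e.1 ≠ z ∧ e.2 ≠ z) with hE'
  set g : V × V → MvPolynomial V k := fun e => X e.1 * X e.2 ^ w e.2 with hg
  set f : MvPolynomial V k := X y * X z ^ w z with hfdef
  have hE'mem : ∀ e ∈ E', e.1 ≠ y ∧ e.2 ≠ y ∧ e.1 ≠ z ∧ e.2 ≠ z := by
    intro e he
    rw [hE', Finset.mem_filter] at he
    obtain ⟨heE, h1, h2⟩ := he
    refine ⟨fun h => h2 ?_, fun h => h2 ?_, h1, h2⟩
    · rw [hcomp e heE (Or.inl h)]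
    · rw [hcomp e heE (Or.inr (Or.inl h))]
  have hE'sub : E' ⊆ E := Finset.filter_subset _ _
  have hset : g '' (E : Set (V × V)) = g '' (E' : Set (V × V)) ∪ {f} := by
    apply Set.Subset.antisymm
    · rintro m ⟨e, he, rfl⟩
      by_cases hz : e.1 ≠ z ∧ e.2 ≠ z
      · refine Or.inl ⟨e, ?_, rfl⟩
        rw [hE', Finset.coe_filter]
        exact ⟨he, hz⟩
      · refine Or.inr ?_
        have he' : e = (y, z) := hcomp e he (by tauto)
        simp only [Set.mem_singleton_iff, he', hg, hfdef]
    · rintro m (⟨e, he, rfl⟩ | hm)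
      · exact ⟨e, hE'sub he, rfl⟩
      · refine ⟨(y, z), hyz, ?_⟩
        simp only [Set.mem_singleton_iff] at hm
        rw [hm]
  have hIJ : edgeIdeal k E w = edgeIdeal k E' w ⊔ Ideal.span {f} := by
    rw [edgeIdeal, edgeIdeal, ← hg, hset, Ideal.span_union]
  have hJI : edgeIdeal k E' w ≤ edgeIdeal k E w := by
    rw [edgeIdeal, edgeIdeal, ← hg]
    exact Ideal.span_mono (Set.image_mono (Finset.coe_subset.mpr hE'sub))
  constructor
  · rw [hIJ]
    exact sup_pow_eq _ _ t (by omega)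
  · apply le_antisymm
    · intro p hp
      rw [Submodule.mem_inf] at hp
      obtain ⟨hp1, hp2⟩ := hp
      rw [Ideal.mem_span_singleton_mul] at hp1
      obtain ⟨q, hq, rfl⟩ := hp1
      have hG : ∀ m ∈ g '' (E' : Set (V × V)), liftHom k V y z m = C m := by
        rintro m ⟨e, he, rfl⟩
        obtain ⟨h1, h2, h3, h4⟩ := hE'mem e (by exact_mod_cast he)
        show liftHom k V y z (X e.1 * X e.2 ^ w e.2) = C (X e.1 * X e.2 ^ w e.2)
        rw [map_mul, map_pow, liftHom, eval₂Hom_X', eval₂Hom_X',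
          if_neg (by tauto : ¬(e.1 = y ∨ e.1 = z)), if_neg (by tauto : ¬(e.2 = y ∨ e.2 = z)),
          ← map_pow, ← map_mul]
      have hp2' : X y * X z ^ w z * q ∈ (Ideal.span (g '' (E' : Set (V × V)))) ^ t := by
        rw [← hfdef]
        exact hp2
      have hq' : q ∈ (Ideal.span (g '' (E' : Set (V × V)))) ^ t :=
        key_colon k V y z (w z) _ hG t q hp2'
      exact Ideal.mul_mem_mul (Ideal.mem_span_singleton_self f) hq'
    · refine le_inf ?_ Ideal.mul_le_right
      refine Ideal.mul_mono_right ?_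
      exact le_trans (Ideal.pow_right_mono hJI t) (Ideal.pow_le_pow_right (by omega))
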